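/- For every λ > 0, ∫₀^∞ e^{iλu³}/(1 + u²) du = (e^{iπ/6}/(3λ^{1/3})) Γ(1/3) + R with |R| ≤ 1/(3λ). -/

import Mathlib

open Real Complex Set MeasureTheory Filter

noncomputable def osPhi (w : ℂ) : ℂ :=
  w ^ (((-2/3 : ℝ)) : ℂ) / (3 * (1 + w ^ (((2/3 : ℝ)) : ℂ)))

noncomputable def osG (lam : ℝ) (w : ℂ) : ℂ := Complex.exp (Complex.I * lam * w) * osPhi w

lemma re_cpow_nonneg {w : ℂ} (hw : 0 ≤ w.re) : 0 ≤ (w ^ (((2/3 : ℝ)) : ℂ)).re := by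
  rcases eq_or_ne w 0 with rfl | hw0
  · rw [Complex.zero_cpow (by norm_num : (((2/3:ℝ)):ℂ) ≠ 0)]; simp
  · rw [Complex.cpow_def_of_ne_zero hw0, Complex.exp_re]
    have harg : |w.arg| ≤ π/2 := Complex.abs_arg_le_pi_div_two_iff.2 hw
    have him : (Complex.log w * (((2/3:ℝ)):ℂ)).im = w.arg * (2/3) := by
      simp [Complex.mul_im, Complex.log_im]
    rw [him]
    have hb := abs_le.1 harg
    refine mul_nonneg (Real.exp_nonneg _) (Real.cos_nonneg_of_mem_Icc ⟨?_, ?_⟩)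
    · nlinarith [Real.pi_pos]
    · nlinarith [Real.pi_pos]

lemma one_le_abs_denom {w : ℂ} (hw : 0 ≤ w.re) :
    1 ≤ ‖(1 + w ^ (((2/3 : ℝ)) : ℂ))‖ := by
  have h := re_cpow_nonneg hw
  calc (1:ℝ) ≤ (1 + w ^ (((2/3 : ℝ)) : ℂ)).re := by
        rw [Complex.add_re, Complex.one_re]; linarith
  _ ≤ ‖_‖ := Complex.re_le_norm _

lemma denom_ne_zero {w : ℂ} (hw : 0 ≤ w.re) : (3 : ℂ) * (1 + w ^ (((2/3 : ℝ)) : ℂ)) ≠ 0 := by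
  have h := one_le_abs_denom hw
  intro hc
  rw [mul_eq_zero] at hc
  rcases hc with hc | hc
  · norm_num at hc
  · rw [hc] at h; simp at h; linarith

lemma abs_osPhi_le {w : ℂ} (hw0 : w ≠ 0) (hw : 0 ≤ w.re) :
    ‖(osPhi w)‖ ≤ ‖w‖ ^ (-2/3 : ℝ) / 3 := by
  unfold osPhi
  rw [norm_div, norm_mul]
  have h1 : ‖(w ^ (((-2/3 : ℝ)) : ℂ))‖ = ‖w‖ ^ (-2/3 : ℝ) := by
    rw [Complex.norm_cpow_of_ne_zero hw0]
    simp
  rw [h1]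
  have h2 : (3:ℝ) ≤ ‖(3:ℂ)‖ * ‖(1 + w ^ (((2/3 : ℝ)) : ℂ))‖ := by
    have := one_le_abs_denom hw
    simp only [Complex.norm_ofNat]
    nlinarith
  apply div_le_div_of_nonneg_left (by positivity) (by norm_num) h2

lemma abs_osG_le {lam : ℝ} {w : ℂ} (hw0 : w ≠ 0) (hw : 0 ≤ w.re) :
    ‖(osG lam w)‖ ≤ Real.exp (-(lam * w.im)) * ‖w‖ ^ (-2/3 : ℝ) / 3 := by
  unfold osG
  rw [norm_mul, Complex.norm_exp]
  have hre : (Complex.I * lam * w).re = -(lam * w.im) := by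
    simp [Complex.mul_re, Complex.mul_im]
  rw [hre, mul_div_assoc]
  exact mul_le_mul_of_nonneg_left (abs_osPhi_le hw0 hw) (Real.exp_nonneg _)

lemma osG_differentiableAt {lam : ℝ} {w : ℂ} (h1 : w ∈ Complex.slitPlane) (h2 : 0 ≤ w.re) :
    DifferentiableAt ℂ (osG lam) w := by
  apply DifferentiableAt.mul
  · exact (differentiableAt_const _ |>.mul differentiableAt_id).cexp
  · apply DifferentiableAt.div
    · exact differentiableAt_id.cpow (differentiableAt_const _) h1
    · exact (differentiableAt_const _).mul
        ((differentiableAt_const _).add (differentiableAt_id.cpow (differentiableAt_const _) h1))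
    · exact denom_ne_zero h2

lemma osG_real_abs {lam : ℝ} {x : ℝ} (hx : 0 < x) :
    ‖(osG lam x)‖ ≤ x ^ (-2/3 : ℝ) / (3 * (1 + x ^ (2/3 : ℝ))) := by
  unfold osG osPhi
  rw [norm_mul, norm_div, norm_mul, Complex.norm_exp]
  have h0 : ((x:ℂ)).im = 0 := rfl
  have hre : (Complex.I * lam * x).re = 0 := by simp [Complex.mul_re, Complex.mul_im]
  rw [hre, Real.exp_zero, one_mul]
  have h1 : ‖((x:ℂ) ^ (((-2/3 : ℝ)) : ℂ))‖ = x ^ (-2/3 : ℝ) := by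
    rw [← Complex.ofReal_cpow hx.le, Complex.norm_real, Real.norm_eq_abs]
    exact abs_of_nonneg (by positivity)
  have h2 : ‖(1 + (x:ℂ) ^ (((2/3 : ℝ)) : ℂ))‖ = 1 + x ^ (2/3 : ℝ) := by
    rw [← Complex.ofReal_cpow hx.le]
    rw [show (1 : ℂ) + ((x ^ (2/3:ℝ) : ℝ) : ℂ) = (((1 + x ^ (2/3:ℝ) : ℝ)) : ℂ) by push_cast; ring]
    rw [Complex.norm_real, Real.norm_eq_abs]
    exact abs_of_nonneg (by positivity)
  rw [h1, h2]
  simp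

lemma osG_cont_real {lam : ℝ} : ContinuousOn (fun x : ℝ => osG lam x) (Ioi 0) := by
  intro x hx
  have : ContinuousAt (fun x : ℝ => osG lam x) x :=
    ContinuousAt.comp
      (osG_differentiableAt (Or.inl (by simpa using hx)) (by simpa using le_of_lt hx)).continuousAt
      Complex.continuous_ofReal.continuousAt
  exact this.continuousWithinAt

lemma osG_integrableOn_real {lam : ℝ} : IntegrableOn (fun x : ℝ => osG lam x) (Ioi 0) := by
  have hmeas : AEStronglyMeasurable (fun x : ℝ => osG lam x) (volume.restrict (Ioi 0)) :=
    osG_cont_real.aestronglyMeasurable measurableSet_Ioi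
  rw [show Ioi (0:ℝ) = Ioc 0 1 ∪ Ioi 1 from (Ioc_union_Ioi_eq_Ioi zero_le_one).symm]
  rw [show Ioi (0:ℝ) = Ioc 0 1 ∪ Ioi 1 from (Ioc_union_Ioi_eq_Ioi zero_le_one).symm] at hmeas
  apply IntegrableOn.union
  · apply Integrable.mono' (g := fun x : ℝ => x ^ (-2/3 : ℝ) / 3)
    · have : IntervalIntegrable (fun x : ℝ => x ^ (-2/3:ℝ)) volume 0 1 :=
        intervalIntegral.intervalIntegrable_rpow' (by norm_num)
      exact ((intervalIntegrable_iff_integrableOn_Ioc_of_le zero_le_one).mp this).div_const 3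
    · exact hmeas.mono_set subset_union_left
    · filter_upwards [ae_restrict_mem measurableSet_Ioc] with x hx
      refine (osG_real_abs hx.1).trans ?_
      have h3 : (0:ℝ) < 3 * (1 + x ^ (2/3:ℝ)) := by
        nlinarith [Real.rpow_nonneg hx.1.le (2/3:ℝ)]
      rw [div_le_div_iff₀ h3 (by norm_num)]
      nlinarith [Real.rpow_nonneg (le_of_lt hx.1) (-2/3 : ℝ), Real.rpow_nonneg (le_of_lt hx.1) (2/3:ℝ),
        mul_nonneg (Real.rpow_nonneg (le_of_lt hx.1) (-2/3 : ℝ)) (Real.rpow_nonneg (le_of_lt hx.1) (2/3:ℝ))]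
  · apply Integrable.mono' (g := fun x : ℝ => x ^ (-4/3 : ℝ) / 3)
    · exact (integrableOn_Ioi_rpow_of_lt (by norm_num) one_pos).div_const 3
    · exact hmeas.mono_set subset_union_right
    · filter_upwards [ae_restrict_mem measurableSet_Ioi] with x hx
      have hx1 : (1:ℝ) < x := hx
      have hx0 : (0:ℝ) < x := lt_trans one_pos hx1
      refine (osG_real_abs hx0).trans ?_
      have key : x ^ (-2/3 : ℝ) / x ^ (2/3 : ℝ) = x ^ (-4/3 : ℝ) := by
        rw [← Real.rpow_sub hx0]; norm_num
      have h1 : (0:ℝ) < x ^ (2/3:ℝ) := Real.rpow_pos_of_pos hx0 _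
      have h2 : (0:ℝ) ≤ x ^ (-2/3:ℝ) := Real.rpow_nonneg hx0.le _
      rw [div_le_div_iff₀ (by positivity) (by norm_num), ← key]
      rw [div_mul_eq_mul_div, le_div_iff₀ h1]
      nlinarith

lemma osG_integrableOn_vert {lam : ℝ} (hlam : 0 < lam) {a : ℝ} (ha : 0 < a) :
    IntegrableOn (fun y : ℝ => osG lam (a + y * Complex.I)) (Ioi 0) := by
  apply Integrable.mono' (g := fun y : ℝ => a ^ (-2/3 : ℝ) / 3 * Real.exp (-lam * y))
  · exact ((exp_neg_integrableOn_Ioi 0 hlam).const_mul _)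
  · apply ContinuousOn.aestronglyMeasurable _ measurableSet_Ioi
    intro y hy
    apply ContinuousAt.continuousWithinAt
    refine ContinuousAt.comp (f := fun y : ℝ => (a : ℂ) + y * Complex.I)
      (osG_differentiableAt (Or.inl ?_) ?_).continuousAt (by fun_prop)
    · simpa using ha
    · simpa using ha.le
  · filter_upwards [ae_restrict_mem measurableSet_Ioi] with y hy
    have hy0 : (0:ℝ) < y := hy
    have hw0 : ((a:ℂ) + y * Complex.I) ≠ 0 := by
      intro hc
      have : ((a:ℂ) + y * Complex.I).re = 0 := by rw [hc]; simp
      simp [Complex.add_re, Complex.mul_re] at this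
      linarith
    have hwre : 0 ≤ ((a:ℂ) + y * Complex.I).re := by
      simp [Complex.add_re, Complex.mul_re]; positivity
    refine (abs_osG_le hw0 hwre).trans ?_
    have him : ((a:ℂ) + y * Complex.I).im = y := by simp
    have habs : a ≤ ‖((a:ℂ) + y * Complex.I)‖ := by
      have := Complex.re_le_norm ((a:ℂ) + y * Complex.I)
      simpa [Complex.add_re, Complex.mul_re] using this
    have hr : ‖((a:ℂ) + y * Complex.I)‖ ^ (-2/3:ℝ) ≤ a ^ (-2/3:ℝ) :=
      Real.rpow_le_rpow_of_nonpos ha habs (by norm_num)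
    rw [him]
    calc Real.exp (-(lam * y)) * ‖((a:ℂ) + y * Complex.I)‖ ^ (-2/3:ℝ) / 3
        ≤ Real.exp (-(lam * y)) * a ^ (-2/3:ℝ) / 3 := by
          apply div_le_div_of_nonneg_right (mul_le_mul_of_nonneg_left hr (Real.exp_nonneg _)) (by norm_num)
      _ = a ^ (-2/3 : ℝ) / 3 * Real.exp (-lam * y) := by rw [neg_mul]; ring

lemma osG_rect {lam : ℝ} (hlam : 0 < lam) {eps R : ℝ} (heps : 0 < eps) (hepsR : eps ≤ R) :
    (∫ x in eps..R, osG lam x) = Complex.I • (∫ y in Ioi (0:ℝ), osG lam (eps + y * Complex.I))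
      - Complex.I • (∫ y in Ioi (0:ℝ), osG lam (R + y * Complex.I)) := by
  -- rectangle identity for each T ≥ 0
  have hrect : ∀ T : ℝ, 0 ≤ T →
      (∫ x in eps..R, osG lam x) - (∫ x in eps..R, osG lam (x + T * Complex.I))
        + Complex.I • (∫ y in (0:ℝ)..T, osG lam (R + y * Complex.I))
        - Complex.I • (∫ y in (0:ℝ)..T, osG lam (eps + y * Complex.I)) = 0 := by
    intro T hT
    have H := Complex.integral_boundary_rect_eq_zero_of_differentiableOn (osG lam)
      (eps : ℂ) ((R : ℂ) + T * Complex.I) ?_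
    · have hre1 : ((eps : ℂ)).re = eps := by simp
      have him1 : ((eps : ℂ)).im = 0 := by simp
      have hre2 : ((R : ℂ) + T * Complex.I).re = R := by simp
      have him2 : ((R : ℂ) + T * Complex.I).im = T := by simp
      rw [hre1, him1, hre2, him2] at H
      simpa using H
    · intro w hw
      rw [Complex.mem_reProdIm] at hw
      obtain ⟨hw1, hw2⟩ := hw
      have hre1 : ((eps : ℂ)).re = eps := by simp
      have hre2 : ((R : ℂ) + T * Complex.I).re = R := by simp
      rw [hre1, hre2, uIcc_of_le hepsR] at hw1
      have hwre : 0 < w.re := lt_of_lt_of_le heps hw1.1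
      exact (osG_differentiableAt (Or.inl hwre) hwre.le).differentiableWithinAt
  -- limits as T → ∞
  have lim2 : Tendsto (fun T : ℝ => ∫ x in eps..R, osG lam (x + T * Complex.I)) atTop (nhds 0) := by
    apply squeeze_zero_norm (a := fun T => Real.exp (-(lam * T)) * (eps ^ (-2/3 : ℝ) / 3) * |R - eps|)
    · intro T
      apply intervalIntegral.norm_integral_le_of_norm_le_const
      intro x hx
      rw [uIoc_of_le hepsR] at hx
      have hx0 : 0 < x := lt_of_le_of_lt heps.le hx.1
      have hw0 : ((x:ℂ) + T * Complex.I) ≠ 0 := by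
        intro hc
        have : ((x:ℂ) + T * Complex.I).re = 0 := by rw [hc]; simp
        simp at this
        linarith
      have hwre : 0 ≤ ((x:ℂ) + T * Complex.I).re := by simp; linarith
      refine le_trans (abs_osG_le hw0 hwre) ?_
      have him : ((x:ℂ) + T * Complex.I).im = T := by simp
      have habs : eps ≤ ‖((x:ℂ) + T * Complex.I)‖ := by
        have h1 := Complex.re_le_norm ((x:ℂ) + T * Complex.I)
        simp only [Complex.add_re, Complex.ofReal_re, Complex.mul_re, Complex.I_re,
          Complex.I_im, Complex.ofReal_im] at h1
        have : eps ≤ x := hx.1.le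
        nlinarith [h1]
      have hr : ‖((x:ℂ) + T * Complex.I)‖ ^ (-2/3:ℝ) ≤ eps ^ (-2/3:ℝ) :=
        Real.rpow_le_rpow_of_nonpos heps habs (by norm_num)
      rw [him, mul_div_assoc]
      exact mul_le_mul_of_nonneg_left (by
        apply div_le_div_of_nonneg_right hr (by norm_num)) (Real.exp_nonneg _)
    · have h1 : Tendsto (fun T : ℝ => Real.exp (-(lam * T))) atTop (nhds 0) := by
        have h0 : Tendsto (fun T : ℝ => lam * T) atTop atTop :=
          Tendsto.const_mul_atTop hlam tendsto_id
        exact Tendsto.congr (fun T => rfl) (Real.tendsto_exp_neg_atTop_nhds_zero.comp h0)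
      have := (h1.mul_const (eps ^ (-2/3 : ℝ) / 3)).mul_const |R - eps|
      simpa using this
  have lim3 : Tendsto (fun T : ℝ => ∫ y in (0:ℝ)..T, osG lam (R + y * Complex.I)) atTop
      (nhds (∫ y in Ioi (0:ℝ), osG lam (R + y * Complex.I))) :=
    intervalIntegral_tendsto_integral_Ioi 0
      (osG_integrableOn_vert hlam (lt_of_lt_of_le heps hepsR)) tendsto_id
  have lim4 : Tendsto (fun T : ℝ => ∫ y in (0:ℝ)..T, osG lam (eps + y * Complex.I)) atTop
      (nhds (∫ y in Ioi (0:ℝ), osG lam (eps + y * Complex.I))) :=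
    intervalIntegral_tendsto_integral_Ioi 0 (osG_integrableOn_vert hlam heps) tendsto_id
  have lime : Tendsto (fun T : ℝ =>
      (∫ x in eps..R, osG lam x) - (∫ x in eps..R, osG lam (x + T * Complex.I))
        + Complex.I • (∫ y in (0:ℝ)..T, osG lam (R + y * Complex.I))
        - Complex.I • (∫ y in (0:ℝ)..T, osG lam (eps + y * Complex.I))) atTop
      (nhds ((∫ x in eps..R, osG lam x) - 0
        + Complex.I • (∫ y in Ioi (0:ℝ), osG lam (R + y * Complex.I))
        - Complex.I • (∫ y in Ioi (0:ℝ), osG lam (eps + y * Complex.I)))) :=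
    ((tendsto_const_nhds.sub lim2).add (lim3.const_smul _)).sub (lim4.const_smul _)
  have heq : (∫ x in eps..R, osG lam x) - 0
        + Complex.I • (∫ y in Ioi (0:ℝ), osG lam (R + y * Complex.I))
        - Complex.I • (∫ y in Ioi (0:ℝ), osG lam (eps + y * Complex.I)) = 0 := by
    refine tendsto_nhds_unique lime (Tendsto.congr' ?_ tendsto_const_nhds)
    filter_upwards [eventually_ge_atTop (0:ℝ)] with T hT
    exact (hrect T hT).symm
  have := heq
  rw [sub_zero] at this
  linear_combination this

lemma osG_halfline {lam : ℝ} (hlam : 0 < lam) {eps : ℝ} (heps : 0 < eps) :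
    (∫ x in Ioi eps, osG lam x) = Complex.I • (∫ y in Ioi (0:ℝ), osG lam (eps + y * Complex.I)) := by
  have C0 : (0:ℝ) < ∫ y in Ioi (0:ℝ), Real.exp (-lam * y) := by
    apply setIntegral_pos_iff_support_of_nonneg_ae _ _ |>.mpr
    · have hsub : Ioi (0:ℝ) ⊆ (Function.support fun x : ℝ => Real.exp (-lam * x)) :=
        fun y _ => Real.exp_ne_zero _
      rw [Set.inter_eq_right.mpr hsub]
      simp
    · filter_upwards with y using (Real.exp_pos _).le
    · exact exp_neg_integrableOn_Ioi 0 hlam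
  set C : ℝ := ∫ y in Ioi (0:ℝ), Real.exp (-lam * y) with hC
  -- limit of LHS term
  have lim1 : Tendsto (fun R : ℝ => ∫ x in eps..R, osG lam x) atTop
      (nhds (∫ x in Ioi eps, osG lam x)) :=
    intervalIntegral_tendsto_integral_Ioi eps
      (osG_integrableOn_real.mono_set (Ioi_subset_Ioi heps.le)) tendsto_id
  -- vertical integral at R tends to 0
  have lim2 : Tendsto (fun R : ℝ => Complex.I • (∫ y in Ioi (0:ℝ), osG lam (R + y * Complex.I)))
      atTop (nhds 0) := by
    apply squeeze_zero_norm' (a := fun R : ℝ => R ^ (-2/3 : ℝ) / 3 * C)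
    · filter_upwards [eventually_gt_atTop (0:ℝ)] with R hR
      rw [norm_smul, Complex.norm_I, one_mul]
      have hb : ∀ᵐ (y:ℝ) ∂(volume.restrict (Ioi (0:ℝ))),
          ‖osG lam (R + y * Complex.I)‖ ≤ R ^ (-2/3:ℝ)/3 * Real.exp (-lam * y) := by
        filter_upwards [ae_restrict_mem measurableSet_Ioi] with y hy
        have hy0 : (0:ℝ) < y := hy
        have hw0 : ((R:ℂ) + y * Complex.I) ≠ 0 := by
          intro hc
          have : ((R:ℂ) + y * Complex.I).re = 0 := by rw [hc]; simp
          simp at this; linarith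
        have hwre : 0 ≤ ((R:ℂ) + y * Complex.I).re := by simp; linarith
        refine le_trans (abs_osG_le hw0 hwre) ?_
        have him : ((R:ℂ) + y * Complex.I).im = y := by simp
        have habs : R ≤ ‖((R:ℂ) + y * Complex.I)‖ := by
          have h1 := Complex.re_le_norm ((R:ℂ) + y * Complex.I)
          simpa using h1
        have hr : ‖((R:ℂ) + y * Complex.I)‖ ^ (-2/3:ℝ) ≤ R ^ (-2/3:ℝ) :=
          Real.rpow_le_rpow_of_nonpos hR habs (by norm_num)
        rw [him]
        calc Real.exp (-(lam * y)) * ‖((R:ℂ) + y * Complex.I)‖ ^ (-2/3:ℝ) / 3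
            ≤ Real.exp (-(lam * y)) * R ^ (-2/3:ℝ) / 3 :=
              div_le_div_of_nonneg_right
                (mul_le_mul_of_nonneg_left hr (Real.exp_nonneg _)) (by norm_num)
          _ = R ^ (-2/3:ℝ)/3 * Real.exp (-lam * y) := by rw [neg_mul]; ring
      have := norm_integral_le_of_norm_le
        (((exp_neg_integrableOn_Ioi 0 hlam).const_mul (R ^ (-2/3:ℝ)/3))) hb
      refine this.trans ?_
      rw [integral_const_mul]
    · have h2 : Tendsto (fun R : ℝ => R ^ (-2/3 : ℝ)) atTop (nhds 0) := by
        have := tendsto_rpow_neg_atTop (y := (2/3:ℝ)) (by norm_num)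
        convert this using 2 with R
        norm_num
      have := (h2.div_const 3).mul_const C
      simpa using this
  -- combine with rectangle identity
  have key : Tendsto (fun R : ℝ =>
      Complex.I • (∫ y in Ioi (0:ℝ), osG lam (eps + y * Complex.I))
        - Complex.I • (∫ y in Ioi (0:ℝ), osG lam (R + y * Complex.I))) atTop
      (nhds (∫ x in Ioi eps, osG lam x)) := by
    apply Tendsto.congr' _ lim1
    filter_upwards [eventually_ge_atTop eps] with R hR
    exact osG_rect hlam heps hR
  have := tendsto_nhds_unique key (tendsto_const_nhds.sub lim2)
  rw [sub_zero] at this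
  rw [this]

lemma bound_integrable {lam : ℝ} (hlam : 0 < lam) :
    IntegrableOn (fun y : ℝ => Real.exp (-(lam * y)) * y ^ (-2/3:ℝ) / 3) (Ioi (0:ℝ)) := by
  have h := integrableOn_rpow_mul_exp_neg_mul_rpow (p := 1) (s := (-2/3:ℝ)) (b := lam)
    (by norm_num) one_pos hlam
  have h2 : IntegrableOn (fun x : ℝ => x ^ (-2/3:ℝ) * Real.exp (-lam * x)) (Ioi 0) := by
    refine h.congr_fun (fun x hx => ?_) measurableSet_Ioi
    simp only [Real.rpow_one]
  have h3 : IntegrableOn (fun x : ℝ => x ^ (-2/3:ℝ) * Real.exp (-lam * x) / 3) (Ioi (0:ℝ)) :=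
    h2.div_const 3
  exact h3.congr_fun (fun x hx => by simp only [neg_mul]; ring) measurableSet_Ioi

lemma osG_rotate {lam : ℝ} (hlam : 0 < lam) :
    (∫ x in Ioi (0:ℝ), osG lam x) = Complex.I • (∫ y in Ioi (0:ℝ), osG lam (y * Complex.I)) := by
  -- limit of the left-hand sides of osG_halfline as eps → 0⁺
  have L1 : Tendsto (fun eps : ℝ => ∫ x in Ioi eps, osG lam x) (nhdsWithin 0 (Ioi 0))
      (nhds (∫ x in Ioi (0:ℝ), osG lam x)) := by
    have main : Tendsto (fun eps : ℝ => ∫ x in Ioi (0:ℝ), (Ioi eps).indicator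
        (fun x : ℝ => osG lam x) x) (nhdsWithin 0 (Ioi 0))
        (nhds (∫ x in Ioi (0:ℝ), osG lam x)) := by
      apply tendsto_integral_filter_of_dominated_convergence
        (bound := fun x : ℝ => ‖osG lam x‖)
      · filter_upwards with eps
        exact (osG_integrableOn_real.aestronglyMeasurable).indicator measurableSet_Ioi
      · filter_upwards with eps
        filter_upwards with x
        exact norm_indicator_le_norm_self (fun x : ℝ => osG lam x) x
      · exact osG_integrableOn_real.norm
      · filter_upwards [ae_restrict_mem measurableSet_Ioi] with x hx
        have hev : ∀ᶠ eps in nhdsWithin (0:ℝ) (Ioi 0), eps < x :=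
          ((gt_mem_nhds hx).filter_mono nhdsWithin_le_nhds)
        apply Tendsto.congr' _ tendsto_const_nhds
        filter_upwards [hev] with eps heps
        exact (Set.indicator_of_mem (show x ∈ Ioi eps from heps)
          (fun x : ℝ => osG lam x)).symm
    apply Tendsto.congr' _ main
    filter_upwards [self_mem_nhdsWithin] with eps (heps : (0:ℝ) < eps)
    rw [MeasureTheory.setIntegral_indicator measurableSet_Ioi,
      Set.inter_eq_right.mpr (Ioi_subset_Ioi heps.le)]
  -- limit of the vertical integrals as eps → 0⁺
  have L2 : Tendsto (fun eps : ℝ => ∫ y in Ioi (0:ℝ), osG lam (eps + y * Complex.I))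
      (nhdsWithin 0 (Ioi 0)) (nhds (∫ y in Ioi (0:ℝ), osG lam (y * Complex.I))) := by
    apply tendsto_integral_filter_of_dominated_convergence
      (bound := fun y : ℝ => Real.exp (-(lam * y)) * y ^ (-2/3:ℝ) / 3)
    · filter_upwards [self_mem_nhdsWithin] with eps (heps : (0:ℝ) < eps)
      exact (osG_integrableOn_vert hlam heps).aestronglyMeasurable
    · filter_upwards [self_mem_nhdsWithin] with eps (heps : (0:ℝ) < eps)
      filter_upwards [ae_restrict_mem measurableSet_Ioi] with y hy
      have hy0 : (0:ℝ) < y := hy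
      have hw0 : ((eps:ℂ) + y * Complex.I) ≠ 0 := by
        intro hc
        have : ((eps:ℂ) + y * Complex.I).im = 0 := by rw [hc]; simp
        simp at this; linarith
      have hwre : 0 ≤ ((eps:ℂ) + y * Complex.I).re := by simp; linarith
      refine le_trans (abs_osG_le hw0 hwre) ?_
      have him : ((eps:ℂ) + y * Complex.I).im = y := by simp
      have habs : y ≤ ‖((eps:ℂ) + y * Complex.I)‖ := by
        have h1 := Complex.abs_im_le_norm ((eps:ℂ) + y * Complex.I)
        rw [him] at h1
        exact (le_abs_self y).trans h1
      have hr : ‖((eps:ℂ) + y * Complex.I)‖ ^ (-2/3:ℝ) ≤ y ^ (-2/3:ℝ) :=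
        Real.rpow_le_rpow_of_nonpos hy0 habs (by norm_num)
      rw [him]
      exact div_le_div_of_nonneg_right
        (mul_le_mul_of_nonneg_left hr (Real.exp_nonneg _)) (by norm_num)
    · exact bound_integrable hlam
    · filter_upwards [ae_restrict_mem measurableSet_Ioi] with y hy
      have hy0 : (0:ℝ) < y := hy
      have hcont : ContinuousAt (osG lam) ((y:ℂ) * Complex.I) := by
        refine (osG_differentiableAt (Or.inr ?_) ?_).continuousAt
        · simpa using hy0.ne'
        · simp
      have hmap : Tendsto (fun eps : ℝ => (eps:ℂ) + y * Complex.I) (nhdsWithin 0 (Ioi 0))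
          (nhds ((y:ℂ) * Complex.I)) := by
        have : Tendsto (fun eps : ℝ => (eps:ℂ) + y * Complex.I) (nhds 0)
            (nhds ((0:ℝ) + (y:ℂ) * Complex.I)) := by
          apply Continuous.tendsto (by fun_prop)
        simp only [Complex.ofReal_zero, zero_add] at this
        exact this.mono_left nhdsWithin_le_nhds
      exact hcont.tendsto.comp hmap
  -- combine
  have key : Tendsto (fun eps : ℝ => ∫ x in Ioi eps, osG lam x) (nhdsWithin 0 (Ioi 0))
      (nhds (Complex.I • (∫ y in Ioi (0:ℝ), osG lam (y * Complex.I)))) := by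
    apply Tendsto.congr' _ (L2.const_smul Complex.I)
    filter_upwards [self_mem_nhdsWithin] with eps (heps : (0:ℝ) < eps)
    exact (osG_halfline hlam heps).symm
  exact tendsto_nhds_unique L1 key

lemma qval {lam : ℝ} (hlam : 0 < lam) :
    ∫ y in Ioi (0:ℝ), Real.exp (-(lam*y)) * y ^ (-2/3:ℝ)
      = lam ^ (-1/3 : ℝ) * Real.Gamma (1/3) := by
  calc ∫ y in Ioi (0:ℝ), Real.exp (-(lam*y)) * y ^ (-2/3:ℝ)
      = ∫ y in Ioi (0:ℝ), y ^ (-2/3:ℝ) * Real.exp (-lam * y ^ (1:ℝ)) := by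
        refine setIntegral_congr_fun measurableSet_Ioi (fun y hy => ?_)
        rw [Real.rpow_one, neg_mul]; ring
    _ = lam ^ (-(-2/3+1)/1:ℝ) * (1/1) * Real.Gamma ((-2/3+1)/1) :=
        integral_rpow_mul_exp_neg_mul_rpow one_pos (by norm_num) hlam
    _ = lam ^ (-1/3 : ℝ) * Real.Gamma (1/3) := by norm_num

lemma expval {lam : ℝ} (hlam : 0 < lam) :
    ∫ y in Ioi (0:ℝ), Real.exp (-(lam*y)) = lam⁻¹ := by
  calc ∫ y in Ioi (0:ℝ), Real.exp (-(lam*y))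
      = ∫ y in Ioi (0:ℝ), Real.exp (-lam * y ^ (1:ℝ)) := by
        refine setIntegral_congr_fun measurableSet_Ioi (fun y hy => ?_)
        rw [Real.rpow_one, neg_mul]
    _ = lam ^ (-1/1:ℝ) * Real.Gamma (1/1 + 1) := integral_exp_neg_mul_rpow one_pos hlam
    _ = lam⁻¹ := by
        rw [show (-1/1:ℝ) = -1 by norm_num, show (1:ℝ)/1 + 1 = 2 by norm_num, Real.Gamma_two,
          mul_one, Real.rpow_neg_one]

lemma q_integrable {lam : ℝ} (hlam : 0 < lam) :
    IntegrableOn (fun y : ℝ => Real.exp (-(lam * y)) * y ^ (-2/3:ℝ)) (Ioi (0:ℝ)) := by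
  have h := bound_integrable hlam
  have h2 : IntegrableOn (fun y : ℝ => Real.exp (-(lam * y)) * y ^ (-2/3:ℝ) / 3 * 3)
      (Ioi (0:ℝ)) := h.mul_const (3:ℝ)
  exact h2.congr_fun (fun y hy => by field_simp) measurableSet_Ioi

lemma osG_integrableOn_vert0 {lam : ℝ} (hlam : 0 < lam) :
    IntegrableOn (fun y : ℝ => osG lam (y * Complex.I)) (Ioi (0:ℝ)) := by
  apply Integrable.mono' (g := fun y : ℝ => Real.exp (-(lam * y)) * y ^ (-2/3:ℝ) / 3)
  · exact bound_integrable hlam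
  · apply ContinuousOn.aestronglyMeasurable _ measurableSet_Ioi
    intro y hy
    have hy0 : (0:ℝ) < y := hy
    apply ContinuousAt.continuousWithinAt
    refine ContinuousAt.comp (f := fun y : ℝ => (y : ℂ) * Complex.I)
      (osG_differentiableAt (Or.inr ?_) ?_).continuousAt (by fun_prop)
    · simpa using hy0.ne'
    · simp
  · filter_upwards [ae_restrict_mem measurableSet_Ioi] with y hy
    have hy0 : (0:ℝ) < y := hy
    have hw0 : ((y:ℂ) * Complex.I) ≠ 0 := by
      simp [Complex.ext_iff]
      intro h; linarith
    have hwre : 0 ≤ ((y:ℂ) * Complex.I).re := by simp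
    refine le_trans (abs_osG_le hw0 hwre) ?_
    have him : ((y:ℂ) * Complex.I).im = y := by simp
    have habs : ‖((y:ℂ) * Complex.I)‖ = y := by
      rw [norm_mul, Complex.norm_I, Complex.norm_real, Real.norm_eq_abs, abs_of_pos hy0, mul_one]
    rw [him, habs]

lemma cpow_ofReal_mul_I {y : ℝ} (hy : 0 < y) (c : ℝ) :
    ((y:ℂ) * Complex.I) ^ ((c : ℝ) : ℂ)
      = ((y ^ c : ℝ) : ℂ) * Complex.exp ((c:ℂ) * ((π:ℝ)/2 : ℝ) * Complex.I) := by
  have hne : ((y:ℂ) * Complex.I) ≠ 0 := by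
    simp [Complex.ext_iff]
    intro h; linarith
  rw [Complex.cpow_def_of_ne_zero hne, Complex.log_ofReal_mul hy Complex.I_ne_zero,
    Complex.log_I, add_mul, Complex.exp_add]
  congr 1
  · rw [show ((Real.log y : ℂ)) * (c:ℂ) = ((Real.log y * c : ℝ) : ℂ) by push_cast; ring,
      ← Complex.ofReal_exp, ← Real.exp_log hy, ← Real.exp_mul, Real.exp_log hy]
  · congr 1
    push_cast
    ring

noncomputable def E1 : ℂ := Complex.exp (((-2/3:ℝ):ℂ) * ((π/2 : ℝ):ℂ) * Complex.I)
noncomputable def E2 : ℂ := Complex.exp (((2/3:ℝ):ℂ) * ((π/2 : ℝ):ℂ) * Complex.I)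

lemma osG_I_eq {lam y : ℝ} (hy : 0 < y) :
    Complex.I * osG lam (y * Complex.I)
      = (Complex.I * E1 / 3) * ((Real.exp (-(lam*y)) * y ^ (-2/3:ℝ) : ℝ) : ℂ)
        * (1 + ((y ^ (2/3:ℝ) : ℝ):ℂ) * E2)⁻¹ := by
  unfold osG osPhi E1 E2
  rw [cpow_ofReal_mul_I hy (-2/3), cpow_ofReal_mul_I hy (2/3)]
  rw [show Complex.I * (lam:ℂ) * ((y:ℂ) * Complex.I)
      = ((lam:ℂ)*(y:ℂ)) * (Complex.I*Complex.I) from by ring, Complex.I_mul_I]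
  rw [show ((lam:ℂ)*(y:ℂ)) * (-1) = ((-(lam*y):ℝ):ℂ) from by push_cast; ring]
  rw [← Complex.ofReal_exp]
  rw [div_eq_mul_inv, div_eq_mul_inv, mul_inv]
  push_cast
  ring

lemma abs_IE1 : ‖(Complex.I * E1 / 3)‖ = 1/3 := by
  unfold E1
  rw [norm_div, norm_mul, Complex.norm_I, Complex.norm_exp]
  have : ((((-2/3:ℝ)):ℂ) * ((π/2 : ℝ):ℂ) * Complex.I).re = 0 := by
    simp [Complex.mul_re, Complex.mul_im]
  rw [this, Real.exp_zero]
  simp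

lemma E2_re_nonneg : 0 ≤ E2.re := by
  unfold E2
  rw [Complex.exp_re]
  have him : ((((2/3:ℝ)):ℂ) * ((π/2 : ℝ):ℂ) * Complex.I).im = 2/3 * (π/2) := by
    simp [Complex.mul_im, Complex.mul_re]
  rw [him]
  apply mul_nonneg (Real.exp_nonneg _)
  apply Real.cos_nonneg_of_mem_Icc
  constructor
  · nlinarith [Real.pi_pos]
  · nlinarith [Real.pi_pos]

lemma abs_E2 : ‖E2‖ = 1 := by
  unfold E2
  rw [Complex.norm_exp]
  have : ((((2/3:ℝ)):ℂ) * ((π/2 : ℝ):ℂ) * Complex.I).re = 0 := by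
    simp [Complex.mul_re, Complex.mul_im]
  rw [this, Real.exp_zero]

lemma one_le_abs_denomE {y : ℝ} (hy : 0 ≤ y) :
    1 ≤ ‖(1 + ((y ^ (2/3:ℝ) : ℝ):ℂ) * E2)‖ := by
  have h1 : 0 ≤ (((y ^ (2/3:ℝ) : ℝ):ℂ) * E2).re := by
    rw [Complex.mul_re]
    simp only [Complex.ofReal_re, Complex.ofReal_im, zero_mul, sub_zero]
    exact mul_nonneg (Real.rpow_nonneg hy _) E2_re_nonneg
  calc (1:ℝ) ≤ (1 + ((y ^ (2/3:ℝ) : ℝ):ℂ) * E2).re := by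
        rw [Complex.add_re, Complex.one_re]; linarith
    _ ≤ _ := Complex.re_le_norm _

lemma IE1_eq : Complex.I * E1 = Complex.exp (Complex.I * (π:ℝ) / 6) := by
  unfold E1
  have hI : Complex.I = Complex.exp (((π/2 : ℝ):ℂ) * Complex.I) := by
    rw [Complex.exp_mul_I, ← Complex.ofReal_cos, ← Complex.ofReal_sin,
      Real.cos_pi_div_two, Real.sin_pi_div_two]
    simp
  nth_rewrite 1 [hI]
  rw [← Complex.exp_add]
  congr 1
  push_cast
  ring

-- substitution u ↦ u³
lemma subst_lemma {lam : ℝ} :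
    (∫ u in Ioi (0:ℝ), Complex.exp (Complex.I * lam * u ^ 3) / (1 + (u:ℂ) ^ 2))
      = ∫ x in Ioi (0:ℝ), osG lam x := by
  have h := MeasureTheory.integral_comp_rpow_Ioi (fun x : ℝ => osG lam x)
    (p := 3) (by norm_num)
  rw [← h]
  refine setIntegral_congr_fun measurableSet_Ioi (fun x hx => ?_)
  have hx0 : (0:ℝ) < x := hx
  have hx3 : (0:ℝ) < x ^ (3:ℝ) := Real.rpow_pos_of_pos hx0 _
  show _ = (|(3:ℝ)| * x ^ ((3:ℝ) - 1)) • osG lam ((x ^ (3:ℝ) : ℝ) : ℂ)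
  unfold osG osPhi
  have hc1 : ((x ^ (3:ℝ) : ℝ):ℂ) ^ (((-2/3:ℝ)):ℂ) = (((x ^ (-2:ℝ) : ℝ)):ℂ) := by
    rw [← Complex.ofReal_cpow hx3.le, ← Real.rpow_mul hx0.le]
    norm_num
  have hc2 : ((x ^ (3:ℝ) : ℝ):ℂ) ^ (((2/3:ℝ)):ℂ) = (((x ^ (2:ℝ) : ℝ)):ℂ) := by
    rw [← Complex.ofReal_cpow hx3.le, ← Real.rpow_mul hx0.le]
    norm_num
  rw [hc1, hc2]
  have hr3 : (x ^ (3:ℝ) : ℝ) = x ^ (3:ℕ) := by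
    rw [← Real.rpow_natCast]; norm_num
  have hr2 : (x ^ (2:ℝ) : ℝ) = x ^ (2:ℕ) := by
    rw [← Real.rpow_natCast]; norm_num
  have hrm2 : (x ^ (-2:ℝ) : ℝ) = (x ^ (2:ℕ))⁻¹ := by
    rw [← hr2, ← Real.rpow_neg_one, ← Real.rpow_mul hx0.le]
    norm_num
  have hr31 : x ^ ((3:ℝ) - 1) = x ^ (2:ℕ) := by
    rw [← hr2]; norm_num
  rw [hr3, hrm2, hr31]
  have hden : (1 : ℂ) + (x:ℂ)^(2:ℕ) ≠ 0 := by
    rw [show (1 : ℂ) + (x:ℂ)^(2:ℕ) = (((1 + x^(2:ℕ) : ℝ)):ℂ) by push_cast; ring]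
    rw [Ne, Complex.ofReal_eq_zero]
    positivity
  have hxne : (x:ℂ) ≠ 0 := by
    rw [Ne, Complex.ofReal_eq_zero]; exact hx0.ne'
  rw [Complex.real_smul]
  push_cast
  field_simp
  ring_nf
  push_cast
  rw [hr2]
  push_cast
  rw [← add_mul, show (x:ℂ)^2*3 + 3 = 3*(1+(x:ℂ)^2) by ring, mul_assoc, mul_inv_cancel₀ hden, mul_one]

theorem oscillatory_integral_asymptotic (lam : ℝ) (hlam : 0 < lam) :
    ∃ R : ℂ,
      (∫ u in Set.Ioi (0:ℝ), Complex.exp (Complex.I * lam * u ^ 3) / (1 + (u:ℂ) ^ 2)) =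
        Complex.exp (Complex.I * π / 6) / (3 * (lam : ℂ) ^ ((1:ℂ)/3)) * Real.Gamma (1/3) + R ∧
      ‖R‖ ≤ 1 / (3 * lam) := by
  set main : ℂ :=
    Complex.exp (Complex.I * π / 6) / (3 * (lam : ℂ) ^ ((1:ℂ)/3)) * Real.Gamma (1/3) with hmaindef
  set LHS : ℂ :=
    (∫ u in Set.Ioi (0:ℝ), Complex.exp (Complex.I * lam * u ^ 3) / (1 + (u:ℂ) ^ 2)) with hLHSdef
  refine ⟨LHS - main, by ring, ?_⟩
  -- chain of identities
  have hchain : LHS = ∫ y in Ioi (0:ℝ), Complex.I * osG lam (y * Complex.I) := by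
    rw [hLHSdef, subst_lemma, osG_rotate hlam, ← integral_smul]
    simp only [smul_eq_mul]
  -- the main term as an integral
  have hl3 : (0:ℝ) < lam ^ (1/3:ℝ) := Real.rpow_pos_of_pos hlam _
  have hne : ((lam ^ (1/3:ℝ) : ℝ) : ℂ) ≠ 0 := by
    rw [Ne, Complex.ofReal_eq_zero]; exact hl3.ne'
  have hcp : (lam:ℂ) ^ ((1:ℂ)/3) = ((lam ^ (1/3:ℝ) : ℝ):ℂ) := by
    rw [show ((1:ℂ)/3) = (((1/3:ℝ)):ℂ) by norm_num, ← Complex.ofReal_cpow hlam.le]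
  have hneg : lam ^ (-1/3:ℝ) = (lam ^ (1/3:ℝ))⁻¹ := by
    rw [show (-1/3:ℝ) = -(1/3) by norm_num, Real.rpow_neg hlam.le]
  have hmain : main = (Complex.I * E1 / 3)
      * ((lam ^ (-1/3:ℝ) * Real.Gamma (1/3) : ℝ) : ℂ) := by
    rw [hmaindef, ← IE1_eq, hcp, hneg]
    push_cast
    field_simp
  have hf2val : ∫ y in Ioi (0:ℝ),
      (Complex.I * E1 / 3) * ((Real.exp (-(lam*y)) * y ^ (-2/3:ℝ) : ℝ) : ℂ) = main := by
    have hcoe : ∫ y in Ioi (0:ℝ), ((Real.exp (-(lam*y)) * y ^ (-2/3:ℝ) : ℝ) : ℂ)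
        = ((∫ y in Ioi (0:ℝ), Real.exp (-(lam*y)) * y ^ (-2/3:ℝ) : ℝ) : ℂ) :=
      integral_ofReal
    rw [MeasureTheory.integral_const_mul, hcoe, qval hlam, hmain]
  -- integrability
  have hI1 : IntegrableOn (fun y : ℝ => Complex.I * osG lam (y * Complex.I)) (Ioi (0:ℝ)) :=
    (osG_integrableOn_vert0 hlam).const_mul _
  have hq : IntegrableOn (fun y : ℝ => ((Real.exp (-(lam*y)) * y ^ (-2/3:ℝ) : ℝ) : ℂ))
      (Ioi (0:ℝ)) := (q_integrable hlam).ofReal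
  have hf2int : IntegrableOn (fun y : ℝ =>
      (Complex.I * E1 / 3) * ((Real.exp (-(lam*y)) * y ^ (-2/3:ℝ) : ℝ) : ℂ)) (Ioi (0:ℝ)) :=
    hq.const_mul _
  have hdiff : LHS - main = ∫ y in Ioi (0:ℝ),
      (Complex.I * osG lam (y * Complex.I)
        - (Complex.I * E1 / 3) * ((Real.exp (-(lam*y)) * y ^ (-2/3:ℝ) : ℝ) : ℂ)) := by
    rw [hchain, ← hf2val, ← MeasureTheory.integral_sub hI1 hf2int]
  -- the bound
  have hbound_int : IntegrableOn (fun y : ℝ => Real.exp (-(lam * y)) / 3) (Ioi (0:ℝ)) := by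
    have h : IntegrableOn (fun y : ℝ => Real.exp (-lam * y) / 3) (Ioi (0:ℝ)) :=
      (exp_neg_integrableOn_Ioi 0 hlam).div_const 3
    exact h.congr_fun (fun y _ => by simp only [neg_mul]) measurableSet_Ioi
  have hbnd : ∀ᵐ (y:ℝ) ∂(volume.restrict (Ioi (0:ℝ))),
      ‖Complex.I * osG lam (y * Complex.I)
        - (Complex.I * E1 / 3) * ((Real.exp (-(lam*y)) * y ^ (-2/3:ℝ) : ℝ) : ℂ)‖
        ≤ Real.exp (-(lam * y)) / 3 := by
    filter_upwards [ae_restrict_mem measurableSet_Ioi] with y hy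
    have hy0 : (0:ℝ) < y := hy
    rw [osG_I_eq hy0]
    set A : ℂ := Complex.I * E1 / 3
    set q : ℝ := Real.exp (-(lam*y)) * y ^ (-2/3:ℝ) with hqdef
    set z : ℂ := ((y ^ (2/3:ℝ) : ℝ):ℂ) * E2 with hzdef
    rw [show A * (q:ℂ) * (1+z)⁻¹ - A * (q:ℂ) = A * (q:ℂ) * ((1+z)⁻¹ - 1) from by ring]
    rw [norm_mul, norm_mul, abs_IE1, Complex.norm_real, Real.norm_eq_abs]
    have hqnn : 0 ≤ q := mul_nonneg (Real.exp_nonneg _) (Real.rpow_nonneg hy0.le _)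
    rw [_root_.abs_of_nonneg hqnn]
    have hd1 : 1 ≤ ‖(1 + z)‖ := one_le_abs_denomE hy0.le
    have hdne : (1 + z) ≠ 0 := by
      intro hc; rw [hc] at hd1; simp at hd1; linarith
    have hinv : (1+z)⁻¹ - 1 = (-z) * (1+z)⁻¹ := by
      field_simp
      ring
    have habsz : ‖z‖ = y ^ (2/3:ℝ) := by
      rw [hzdef, norm_mul, abs_E2, mul_one, Complex.norm_real, Real.norm_eq_abs]
      exact _root_.abs_of_nonneg (Real.rpow_nonneg hy0.le _)
    have h3 : ‖((1+z)⁻¹ - 1)‖ ≤ y ^ (2/3:ℝ) := by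
      rw [hinv, norm_mul, norm_neg, habsz, norm_inv]
      calc y ^ (2/3:ℝ) * (‖(1+z)‖)⁻¹ ≤ y ^ (2/3:ℝ) * 1 := by
            apply mul_le_mul_of_nonneg_left _ (Real.rpow_nonneg hy0.le _)
            rw [inv_le_one_iff₀]
            right; exact hd1
        _ = y ^ (2/3:ℝ) := mul_one _
    calc 1/3 * q * ‖((1+z)⁻¹ - 1)‖ ≤ 1/3 * q * y ^ (2/3:ℝ) :=
          mul_le_mul_of_nonneg_left h3 (by positivity)
      _ = Real.exp (-(lam * y)) / 3 := by
          rw [hqdef, mul_assoc, mul_assoc, ← Real.rpow_add hy0]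
          norm_num
          ring
  have hfinal : ‖LHS - main‖ ≤ ∫ y in Ioi (0:ℝ), Real.exp (-(lam * y)) / 3 := by
    rw [hdiff]
    exact norm_integral_le_of_norm_le hbound_int hbnd
  have hval : ∫ y in Ioi (0:ℝ), Real.exp (-(lam * y)) / 3 = 1 / (3 * lam) := by
    rw [MeasureTheory.integral_div, expval hlam]
    field_simp
  rw [hval] at hfinal
  exact hfinal
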